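/- Let $a \geq 2$ be an integer and $p, q$ reals with $p \geq q \geq 0$ and $p > 0$. Define $s_m = \frac{6(2^a - 1)p - 3(2^a - 2)q}{2^a - 4^a + 8^a}$ and $s_{2,m} = \frac{6\left(2^{1-a}(q - p) + 2p - q\right)}{-3 \cdot 2^a + 2^{3a+1} + 4^a + 4}$. Then $s_{2,m} \leq s_m$; i.e., the resolution threshold of agony with quadratic penalty ($d = 2$) is at most that of agony with linear penalty ($d = 1$). -/

import Mathlib

/-- The resolution threshold `s_{2,m}` of agony with quadratic penalty (`d = 2`) is at
most the resolution threshold `s_m` of agony with linear penalty (`d = 1`). -/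
theorem stmt_16 (a : ℕ) (ha : 2 ≤ a) (p q : ℝ) (hqp : q ≤ p) (hq : 0 ≤ q) (hp : 0 < p) :
    6 * ((2 : ℝ) ^ (1 - (a : ℤ)) * (q - p) + 2 * p - q) /
        (-3 * (2 : ℝ) ^ a + (2 : ℝ) ^ (3 * a + 1) + (4 : ℝ) ^ a + 4) ≤
      (6 * ((2 : ℝ) ^ a - 1) * p - 3 * ((2 : ℝ) ^ a - 2) * q) /
        ((2 : ℝ) ^ a - (4 : ℝ) ^ a + (8 : ℝ) ^ a) := by
  set x : ℝ := (2 : ℝ) ^ a with hxdef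
  have hx4 : (4 : ℝ) ≤ x := by
    calc (4 : ℝ) = 2 ^ 2 := by norm_num
    _ ≤ 2 ^ a := by
      apply pow_le_pow_right₀ (by norm_num) ha
  have hx0 : (0 : ℝ) < x := by linarith
  have h4 : (4 : ℝ) ^ a = x ^ 2 := by
    rw [hxdef, show (4 : ℝ) = 2 ^ 2 by norm_num, ← pow_mul, mul_comm, pow_mul]
  have h8 : (8 : ℝ) ^ a = x ^ 3 := by
    rw [hxdef, show (8 : ℝ) = 2 ^ 3 by norm_num, ← pow_mul, mul_comm, pow_mul]
  have h31 : (2 : ℝ) ^ (3 * a + 1) = 2 * x ^ 3 := by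
    rw [hxdef, pow_succ, mul_comm 3 a, pow_mul]; ring
  have hinv : (2 : ℝ) ^ (1 - (a : ℤ)) = 2 / x := by
    rw [zpow_sub₀ (by norm_num : (2:ℝ) ≠ 0), zpow_one, zpow_natCast, hxdef]
  rw [h4, h8, h31, hinv]
  have hd1 : (0 : ℝ) < -3 * x + 2 * x ^ 3 + x ^ 2 + 4 := by nlinarith
  have hd2 : (0 : ℝ) < x - x ^ 2 + x ^ 3 := by nlinarith
  rw [div_le_div_iff₀ hd1 hd2]
  have hxne : x ≠ 0 := ne_of_gt hx0
  have key : 0 ≤ 3 * x * (2 * x ^ 3 - x ^ 2 - x + 2) * (2 * (x - 1) * p - (x - 2) * q) := by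
    apply mul_nonneg
    · apply mul_nonneg (by linarith)
      nlinarith
    · nlinarith
  have expand : 6 * (2 / x * (q - p) + 2 * p - q) * (x - x ^ 2 + x ^ 3) * x =
      (6 * (2 * (q - p) + (2 * p - q) * x)) * (x - x ^ 2 + x ^ 3) := by
    have hxi : x * x⁻¹ = 1 := mul_inv_cancel₀ hxne
    linear_combination (12 * (q - p) * (x - x ^ 2 + x ^ 3)) * hxi
  -- reduce to polynomial inequality multiplied by x
  rw [← mul_le_mul_iff_of_pos_right hx0, expand]
  nlinarith [key]
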